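/- arXiv:2202.08421 — 2 statements merged into one kernel-verified Lean document; each statement's English description precedes it below -/
import Mathlib

section
/- Fix a real number λ, a nonnegative integer r, and sequences of real numbers (a_n)_{n≥0} and (b_n)_{n≥0}. If a_n = Σ_{k=0}^{n} (−1)^{n−k} [n+r, k+r]_{r,λ} b_k holds for every n ≥ 0, then b_n = Σ_{k=0}^{n} {n+r, k+r}_{r,λ} a_k holds for every n ≥ 0. -/
open Finset

/-- The degenerate falling factorial `(x)_{n,λ} = x(x-λ)(x-2λ)⋯(x-(n-1)λ)`. -/
noncomputable def degFall (lam x : ℝ) (n : ℕ) : ℝ := ∏ i ∈ Finset.range n, (x - i * lam)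

/-- The degenerate rising factorial `⟨x⟩_{n,λ} = x(x+λ)(x+2λ)⋯(x+(n-1)λ)`. -/
noncomputable def degRise (lam x : ℝ) (n : ℕ) : ℝ := ∏ i ∈ Finset.range n, (x + i * lam)

lemma degRise_neg (lam x : ℝ) (n : ℕ) :
    degRise lam (-x) n = (-1 : ℝ) ^ n * degFall lam x n := by
  unfold degRise degFall
  calc (∏ i ∈ range n, (-x + i * lam))
      = ∏ i ∈ range n, ((-1 : ℝ) * (x - i * lam)) := by
        apply Finset.prod_congr rfl; intros; ring
    _ = (-1 : ℝ) ^ n * ∏ i ∈ range n, (x - i * lam) := by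
        rw [Finset.prod_mul_distrib, Finset.prod_const, Finset.card_range]

/-- The degenerate falling factorial as a polynomial evaluation. -/
lemma degFall_eval (lam x : ℝ) (n : ℕ) :
    degFall lam x n
      = (∏ i ∈ range n, (Polynomial.X - Polynomial.C ((i : ℝ) * lam))).eval x := by
  simp [degFall, Polynomial.eval_prod]

lemma degFall_poly_monic (lam : ℝ) (n : ℕ) :
    (∏ i ∈ range n, (Polynomial.X - Polynomial.C ((i : ℝ) * lam))).Monic := by
  apply Polynomial.monic_prod_of_monic
  intro i _
  exact Polynomial.monic_X_sub_C _

lemma degFall_poly_natDegree (lam : ℝ) (n : ℕ) :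
    (∏ i ∈ range n, (Polynomial.X - Polynomial.C ((i : ℝ) * lam))).natDegree = n := by
  rw [Polynomial.natDegree_prod_of_monic]
  · simp only [Polynomial.natDegree_X_sub_C]
    simp
  · intro i _; exact Polynomial.monic_X_sub_C _

/-- Linear independence of the degenerate falling factorials. -/
lemma degFall_linearIndependent (lam : ℝ) :
    ∀ (n : ℕ) (d : ℕ → ℝ),
      (∀ x : ℝ, ∑ j ∈ range n, d j * degFall lam x j = 0) →
      ∀ j ∈ range n, d j = 0 := by
  intro n
  induction n with
  | zero => intro d _ j hj; simp at hj
  | succ n ih =>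
    intro d hd j hj
    set Q : ℕ → Polynomial ℝ :=
      fun j => ∏ i ∈ range j, (Polynomial.X - Polynomial.C ((i : ℝ) * lam)) with hQ
    have hP : (∑ j ∈ range (n + 1), Polynomial.C (d j) * Q j) = 0 := by
      apply Polynomial.funext
      intro x
      simp only [Polynomial.eval_finset_sum, Polynomial.eval_mul, Polynomial.eval_C,
        Polynomial.eval_zero]
      rw [← hd x]
      apply Finset.sum_congr rfl
      intro j _
      rw [degFall_eval]
    have hdn : d n = 0 := by
      have hcoeff := congrArg (fun p => Polynomial.coeff p n) hP
      simp only [Polynomial.finset_sum_coeff, Polynomial.coeff_C_mul,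
        Polynomial.coeff_zero] at hcoeff
      rw [Finset.sum_range_succ] at hcoeff
      have h1 : (Q n).coeff n = 1 := by
        have := (degFall_poly_monic lam n).coeff_natDegree
        rwa [degFall_poly_natDegree] at this
      have h2 : ∀ j ∈ range n, d j * (Q j).coeff n = 0 := by
        intro j hj
        rw [Polynomial.coeff_eq_zero_of_natDegree_lt, mul_zero]
        rw [degFall_poly_natDegree]
        exact Finset.mem_range.mp hj
      rw [Finset.sum_eq_zero h2, h1, zero_add, mul_one] at hcoeff
      exact hcoeff
    rcases Finset.mem_range_succ_iff.mp hj with hj'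
    rcases Nat.lt_or_ge j n with hlt | hge
    · apply ih d _ j (Finset.mem_range.mpr hlt)
      intro x
      have := hd x
      rw [Finset.sum_range_succ, hdn, zero_mul, add_zero] at this
      exact this
    · have : j = n := le_antisymm hj' hge
      rw [this]; exact hdn

/-- Inverse relation (forward direction): if
`a_n = ∑_{k=0}^{n} (−1)^{n−k} [n+r,k+r]_{r,λ} b_k` for all `n`, then
`b_n = ∑_{k=0}^{n} {n+r,k+r}_{r,λ} a_k` for all `n`. -/
theorem inverse_relation_forward (lam : ℝ) (r : ℕ) (S1 S2 : ℕ → ℕ → ℝ)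
    (hS1 : ∀ (n : ℕ) (x : ℝ),
      degRise 1 (x + r) n = ∑ k ∈ range (n + 1), S1 n k * degRise lam x k)
    (hS2 : ∀ (n : ℕ) (x : ℝ),
      degFall lam (x + r) n = ∑ k ∈ range (n + 1), S2 n k * degFall 1 x k)
    (a b : ℕ → ℝ)
    (hab : ∀ n : ℕ, a n = ∑ k ∈ range (n + 1), (-1 : ℝ) ^ (n - k) * S1 n k * b k) :
    ∀ n : ℕ, b n = ∑ k ∈ range (n + 1), S2 n k * a k := by
  -- Key reflected identity: `(x - r)_{k,1} = ∑_j (-1)^(k-j) S1 k j (x)_{j,λ}`.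
  have star : ∀ (k : ℕ) (x : ℝ),
      degFall 1 (x - r) k
        = ∑ j ∈ range (k + 1), (-1 : ℝ) ^ (k - j) * S1 k j * degFall lam x j := by
    intro k x
    have h := hS1 k (-x)
    have hL : degRise 1 (-x + r) k = (-1 : ℝ) ^ k * degFall 1 (x - r) k := by
      have := degRise_neg 1 (x - r) k
      rw [show -(x - r) = -x + (r : ℝ) by ring] at this
      exact this
    rw [hL] at h
    have h2 : (-1 : ℝ) ^ k * ((-1 : ℝ) ^ k * degFall 1 (x - r) k)
        = (-1 : ℝ) ^ k * (∑ j ∈ range (k + 1), S1 k j * degRise lam (-x) j) := by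
      rw [h]
    rw [← mul_assoc, ← pow_add] at h2
    have hev : ((-1 : ℝ)) ^ (k + k) = 1 := by
      rw [show k + k = 2 * k by ring, pow_mul]; norm_num
    rw [hev, one_mul, Finset.mul_sum] at h2
    rw [h2]
    apply Finset.sum_congr rfl
    intro j hj
    rw [degRise_neg]
    have hjk : j ≤ k := Finset.mem_range_succ_iff.mp hj
    have hpow : (-1 : ℝ) ^ k * (-1 : ℝ) ^ j = (-1 : ℝ) ^ (k - j) := by
      rw [← pow_add, show k + j = (k - j) + 2 * j by omega, pow_add, pow_mul]
      norm_num
    ring_nf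
    rw [mul_assoc, hpow]
  intro n
  -- the coefficient of the composed expansion
  set c : ℕ → ℝ := fun j =>
    ∑ k ∈ range (n + 1),
      (if j ≤ k then S2 n k * ((-1 : ℝ) ^ (k - j) * S1 k j) else 0) with hc
  -- helper: expand an inner sum over `range (k+1)` to `range (n+1)` via `ite`
  have expand : ∀ (f : ℕ → ℝ) (k : ℕ), k ∈ range (n + 1) →
      S2 n k * ∑ j ∈ range (k + 1), (-1 : ℝ) ^ (k - j) * S1 k j * f j
        = ∑ j ∈ range (n + 1),
            (if j ≤ k then S2 n k * ((-1 : ℝ) ^ (k - j) * S1 k j) else 0) * f j := by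
    intro f k hk
    rw [Finset.mul_sum]
    rw [← Finset.sum_subset
      (Finset.range_subset_range.mpr (Nat.succ_le_succ (Finset.mem_range_succ_iff.mp hk)))]
    · apply Finset.sum_congr rfl
      intro j hj
      rw [if_pos (Finset.mem_range_succ_iff.mp hj)]
      ring
    · intro j _ hj
      rw [if_neg, zero_mul]
      intro hle
      exact hj (Finset.mem_range_succ_iff.mpr hle)
  -- the composed polynomial identity
  have key : ∀ x : ℝ, degFall lam x n = ∑ j ∈ range (n + 1), c j * degFall lam x j := by
    intro x
    have h0 : degFall lam x n = ∑ k ∈ range (n + 1), S2 n k * degFall 1 (x - r) k := by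
      have := hS2 n (x - r)
      rw [show x - (r : ℝ) + r = x by ring] at this
      exact this
    rw [h0]
    calc ∑ k ∈ range (n + 1), S2 n k * degFall 1 (x - r) k
        = ∑ k ∈ range (n + 1), ∑ j ∈ range (n + 1),
            (if j ≤ k then S2 n k * ((-1 : ℝ) ^ (k - j) * S1 k j) else 0)
              * degFall lam x j := by
          apply Finset.sum_congr rfl
          intro k hk
          rw [star k x]
          exact expand (fun j => degFall lam x j) k hk
      _ = ∑ j ∈ range (n + 1), c j * degFall lam x j := by
          rw [Finset.sum_comm]
          apply Finset.sum_congr rfl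
          intro j _
          rw [hc, Finset.sum_mul]
  -- identify the coefficients: `c j = δ_{j n}`
  have hdelta : ∀ j ∈ range (n + 1), c j = (if j = n then (1 : ℝ) else 0) := by
    have hli := degFall_linearIndependent lam (n + 1)
      (fun j => c j - (if j = n then (1 : ℝ) else 0)) ?_
    · intro j hj
      have := hli j hj
      linarith [this]
    · intro x
      have hbase : ∑ j ∈ range (n + 1),
          (if j = n then (1 : ℝ) else 0) * degFall lam x j = degFall lam x n := by
        rw [Finset.sum_eq_single n]
        · rw [if_pos rfl, one_mul]
        · intro j _ hjn
          rw [if_neg hjn, zero_mul]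
        · intro h
          exact absurd (Finset.self_mem_range_succ n) h
      have := key x
      calc ∑ j ∈ range (n + 1),
            (c j - if j = n then (1 : ℝ) else 0) * degFall lam x j
          = (∑ j ∈ range (n + 1), c j * degFall lam x j)
            - ∑ j ∈ range (n + 1), (if j = n then (1 : ℝ) else 0) * degFall lam x j := by
            rw [← Finset.sum_sub_distrib]
            apply Finset.sum_congr rfl
            intro j _
            ring
        _ = 0 := by rw [← key x, hbase, sub_self]
  -- conclude
  calc b n = ∑ j ∈ range (n + 1), (if j = n then (1 : ℝ) else 0) * b j := by
        rw [Finset.sum_eq_single n]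
        · rw [if_pos rfl, one_mul]
        · intro j _ hjn
          rw [if_neg hjn, zero_mul]
        · intro h
          exact absurd (Finset.self_mem_range_succ n) h
    _ = ∑ j ∈ range (n + 1), c j * b j := by
        apply Finset.sum_congr rfl
        intro j hj
        rw [hdelta j hj]
    _ = ∑ k ∈ range (n + 1), ∑ j ∈ range (n + 1),
          (if j ≤ k then S2 n k * ((-1 : ℝ) ^ (k - j) * S1 k j) else 0) * b j := by
        rw [Finset.sum_comm]
        apply Finset.sum_congr rfl
        intro j _
        rw [hc, Finset.sum_mul]
    _ = ∑ k ∈ range (n + 1), S2 n k * a k := by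
        apply Finset.sum_congr rfl
        intro k hk
        rw [hab k]
        exact (expand b k hk).symm
end

section
/- Fix a real number λ, a nonnegative integer r, and a real number x. For each k ≥ 0 let F_{k,λ}(x|r) = Σ_{j=0}^{k} x^j · j! · {k+r, j+r}_{r,λ} (the degenerate two variable Fubini polynomial evaluated at (x, r)). Then for every n ≥ 0, x^n · n! = Σ_{k=0}^{n} (−1)^{n−k} [n+r, k+r]_{r,λ} F_{k,λ}(x|r). -/
open Finset

lemma degFall_neg (c z : ℝ) (n : ℕ) : degFall c (-z) n = (-1 : ℝ) ^ n * degRise c z n := by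
  unfold degFall degRise
  rw [show ((-1 : ℝ) ^ n) = ∏ _i ∈ Finset.range n, (-1 : ℝ) by
    rw [Finset.prod_const, Finset.card_range], ← Finset.prod_mul_distrib]
  exact Finset.prod_congr rfl fun i _ => by ring

lemma degRise_neg_nat_eq_zero (m j : ℕ) (h : m < j) : degRise 1 (-(m : ℝ)) j = 0 := by
  unfold degRise
  apply Finset.prod_eq_zero (Finset.mem_range.mpr h)
  ring

lemma degRise_neg_nat_ne_zero (m : ℕ) : degRise 1 (-(m : ℝ)) m ≠ 0 := by
  unfold degRise
  rw [Finset.prod_ne_zero_iff]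
  intro i hi
  have hlt : i < m := Finset.mem_range.mp hi
  have hcast : (i : ℝ) < m := by exact_mod_cast hlt
  intro hzero
  nlinarith

lemma negpow (a b : ℕ) (h : b ≤ a) : (-1 : ℝ) ^ (a - b) = (-1) ^ (a + b) := by
  rw [show a + b = (a - b) + 2 * b by omega, pow_add, pow_mul]
  norm_num

/-- Composite matrix. -/
noncomputable def Tt (S1 S2 : ℕ → ℕ → ℝ) (n j : ℕ) : ℝ :=
  ∑ k ∈ range (n + 1), S1 n k * (if j ≤ k then (-1 : ℝ) ^ (k + j) * S2 k j else 0)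

lemma lemB (lam : ℝ) (r : ℕ) (S1 S2 : ℕ → ℕ → ℝ)
    (hS1 : ∀ (n : ℕ) (y : ℝ),
      degRise 1 (y + r) n = ∑ k ∈ range (n + 1), S1 n k * degRise lam y k)
    (hS2 : ∀ (n : ℕ) (y : ℝ),
      degFall lam (y + r) n = ∑ k ∈ range (n + 1), S2 n k * degFall 1 y k)
    (n : ℕ) (y : ℝ) :
    degRise 1 y n = ∑ j ∈ range (n + 1), Tt S1 S2 n j * degRise 1 y j := by
  have h1 : degRise 1 y n = ∑ k ∈ range (n + 1), S1 n k * degRise lam (y - r) k := by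
    have h := hS1 n (y - r)
    rwa [show y - (r : ℝ) + r = y by ring] at h
  have h2 : ∀ k : ℕ, degRise lam (y - r) k
      = ∑ j ∈ range (k + 1), (-1 : ℝ) ^ (k + j) * S2 k j * degRise 1 y j := by
    intro k
    have h := hS2 k (-y)
    rw [show -y + (r : ℝ) = -(y - r) by ring, degFall_neg] at h
    rw [Finset.sum_congr rfl (fun j _ => by rw [degFall_neg 1 y j])] at h
    have hk : ((-1 : ℝ) ^ k) * ((-1 : ℝ) ^ k) = 1 := by
      rw [← pow_add, ← two_mul, pow_mul]; norm_num
    calc degRise lam (y - r) k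
        = (-1 : ℝ) ^ k * ((-1 : ℝ) ^ k * degRise lam (y - r) k) := by
          rw [← mul_assoc, hk, one_mul]
      _ = (-1 : ℝ) ^ k * ∑ j ∈ range (k + 1), S2 k j * ((-1 : ℝ) ^ j * degRise 1 y j) := by
          rw [h]
      _ = ∑ j ∈ range (k + 1), (-1 : ℝ) ^ (k + j) * S2 k j * degRise 1 y j := by
          rw [Finset.mul_sum]
          exact Finset.sum_congr rfl fun j _ => by rw [pow_add]; ring
  have h3 : ∀ k ∈ range (n + 1), S1 n k * degRise lam (y - r) k
      = ∑ j ∈ range (n + 1),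
          S1 n k * (if j ≤ k then (-1 : ℝ) ^ (k + j) * S2 k j else 0) * degRise 1 y j := by
    intro k hk
    have hkn : k + 1 ≤ n + 1 := by
      have := Finset.mem_range.mp hk; omega
    calc S1 n k * degRise lam (y - r) k
        = ∑ j ∈ range (k + 1),
            S1 n k * (if j ≤ k then (-1 : ℝ) ^ (k + j) * S2 k j else 0) * degRise 1 y j := by
          rw [h2 k, Finset.mul_sum]
          refine Finset.sum_congr rfl fun j hj => ?_
          rw [if_pos (by have := Finset.mem_range.mp hj; omega)]
          ring
      _ = ∑ j ∈ range (n + 1),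
            S1 n k * (if j ≤ k then (-1 : ℝ) ^ (k + j) * S2 k j else 0) * degRise 1 y j := by
          apply Finset.sum_subset (Finset.range_subset_range.mpr hkn)
          intro j _ hj2
          rw [if_neg (by simp only [Finset.mem_range] at hj2; omega), mul_zero, zero_mul]
  rw [h1, Finset.sum_congr rfl h3, Finset.sum_comm]
  refine Finset.sum_congr rfl fun j _ => ?_
  unfold Tt
  rw [Finset.sum_mul]

lemma lemC (lam : ℝ) (r : ℕ) (S1 S2 : ℕ → ℕ → ℝ)
    (hS1 : ∀ (n : ℕ) (y : ℝ),
      degRise 1 (y + r) n = ∑ k ∈ range (n + 1), S1 n k * degRise lam y k)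
    (hS2 : ∀ (n : ℕ) (y : ℝ),
      degFall lam (y + r) n = ∑ k ∈ range (n + 1), S2 n k * degFall 1 y k)
    (n : ℕ) : ∀ m, m ≤ n → Tt S1 S2 n m = if m = n then 1 else 0 := by
  intro m
  induction m using Nat.strong_induction_on with
  | _ m ih =>
    intro hm
    have hB := lemB lam r S1 S2 hS1 hS2 n (-(m : ℝ))
    have hsum : ∑ j ∈ range (n + 1), Tt S1 S2 n j * degRise 1 (-(m : ℝ)) j
        = Tt S1 S2 n m * degRise 1 (-(m : ℝ)) m := by
      apply Finset.sum_eq_single_of_mem m (Finset.mem_range.mpr (by omega))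
      intro j hj hne
      rcases lt_or_gt_of_ne hne with h | h
      · rw [ih j h (by omega), if_neg (by omega), zero_mul]
      · rw [degRise_neg_nat_eq_zero m j h, mul_zero]
    rw [hsum] at hB
    have hne := degRise_neg_nat_ne_zero m
    by_cases hmn : m = n
    · subst hmn
      rw [if_pos rfl]
      have : Tt S1 S2 m m * degRise 1 (-(m : ℝ)) m = 1 * degRise 1 (-(m : ℝ)) m := by
        rw [one_mul, ← hB]
      exact mul_right_cancel₀ hne this
    · rw [if_neg hmn]
      rw [degRise_neg_nat_eq_zero m n (by omega)] at hB
      rcases mul_eq_zero.mp hB.symm with h | h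
      · exact h
      · exact absurd h hne

/-- With `F_{k,λ}(x|r) = ∑_{j=0}^{k} x^j j! {k+r,j+r}_{r,λ}` (the degenerate two variable
Fubini polynomial at `(x,r)`), we have
`x^n n! = ∑_{k=0}^{n} (−1)^{n−k} [n+r,k+r]_{r,λ} F_{k,λ}(x|r)`. -/
theorem degenerate_fubini_identity (lam : ℝ) (r : ℕ) (x : ℝ) (S1 S2 : ℕ → ℕ → ℝ)
    (hS1 : ∀ (n : ℕ) (y : ℝ),
      degRise 1 (y + r) n = ∑ k ∈ range (n + 1), S1 n k * degRise lam y k)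
    (hS2 : ∀ (n : ℕ) (y : ℝ),
      degFall lam (y + r) n = ∑ k ∈ range (n + 1), S2 n k * degFall 1 y k)
    (F : ℕ → ℝ)
    (hF : ∀ k : ℕ, F k = ∑ j ∈ range (k + 1), x ^ j * (Nat.factorial j : ℝ) * S2 k j) :
    ∀ n : ℕ, x ^ n * (Nat.factorial n : ℝ)
      = ∑ k ∈ range (n + 1), (-1 : ℝ) ^ (n - k) * S1 n k * F k := by
  intro n
  have hstep : ∀ k ∈ range (n + 1), (-1 : ℝ) ^ (n - k) * S1 n k * F k
      = ∑ j ∈ range (n + 1), x ^ j * (Nat.factorial j : ℝ) * (-1 : ℝ) ^ (n + j)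
          * (S1 n k * (if j ≤ k then (-1 : ℝ) ^ (k + j) * S2 k j else 0)) := by
    intro k hk
    have hkn : k ≤ n := by have := Finset.mem_range.mp hk; omega
    calc (-1 : ℝ) ^ (n - k) * S1 n k * F k
        = ∑ j ∈ range (k + 1), x ^ j * (Nat.factorial j : ℝ) * (-1 : ℝ) ^ (n + j)
            * (S1 n k * (if j ≤ k then (-1 : ℝ) ^ (k + j) * S2 k j else 0)) := by
          rw [hF k, Finset.mul_sum]
          refine Finset.sum_congr rfl fun j hj => ?_
          have hjk : j ≤ k := by have := Finset.mem_range.mp hj; omega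
          rw [if_pos hjk, negpow n k hkn,
            show ((-1 : ℝ)) ^ (n + k) = (-1 : ℝ) ^ (n + j) * (-1 : ℝ) ^ (k + j) by
              rw [← pow_add, show (n + j) + (k + j) = (n + k) + 2 * j by omega,
                pow_add (-1 : ℝ) (n + k) (2 * j), pow_mul]; norm_num]
          ring
      _ = ∑ j ∈ range (n + 1), x ^ j * (Nat.factorial j : ℝ) * (-1 : ℝ) ^ (n + j)
            * (S1 n k * (if j ≤ k then (-1 : ℝ) ^ (k + j) * S2 k j else 0)) := by
          apply Finset.sum_subset (Finset.range_subset_range.mpr (by omega))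
          intro j _ hj2
          rw [if_neg (by simp only [Finset.mem_range] at hj2; omega), mul_zero, mul_zero]
  rw [Finset.sum_congr rfl hstep, Finset.sum_comm]
  have hinner : ∀ j ∈ range (n + 1),
      (∑ k ∈ range (n + 1), x ^ j * (Nat.factorial j : ℝ) * (-1 : ℝ) ^ (n + j)
          * (S1 n k * (if j ≤ k then (-1 : ℝ) ^ (k + j) * S2 k j else 0)))
      = x ^ j * (Nat.factorial j : ℝ) * (-1 : ℝ) ^ (n + j) * Tt S1 S2 n j := by
    intro j _
    rw [Tt, Finset.mul_sum]
  rw [Finset.sum_congr rfl hinner]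
  have hfinal : ∑ j ∈ range (n + 1),
      x ^ j * (Nat.factorial j : ℝ) * (-1 : ℝ) ^ (n + j) * Tt S1 S2 n j
      = x ^ n * (Nat.factorial n : ℝ) := by
    rw [Finset.sum_eq_single_of_mem n (Finset.mem_range.mpr (by omega))]
    · rw [lemC lam r S1 S2 hS1 hS2 n n le_rfl, if_pos rfl,
        show ((-1 : ℝ)) ^ (n + n) = 1 by rw [← two_mul, pow_mul]; norm_num]
      ring
    · intro j hj hne
      rw [lemC lam r S1 S2 hS1 hS2 n j (by have := Finset.mem_range.mp hj; omega),
        if_neg hne, mul_zero]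
  rw [hfinal]
end
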